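/- For any field k, an algebraic set V ⊆ kⁿ, and a ∈ k[V], the localization k[V]_{⟨a⟩} of k[V] at the multiplicative set Σ_a is k-isomorphic to the canonical localization (k[V]_a)_M of the usual localization k[V]_a. -/

import Mathlib

set_option synthInstance.maxHeartbeats 800000
set_option maxHeartbeats 1600000

open MvPolynomial

/-- The coordinate ring `k[V]`, realised as the algebra of polynomial functions on `V`. -/
noncomputable def coordRing (k : Type) [Field k] (n : ℕ) (V : Set (Fin n → k)) :
    Subalgebra k (↥V → k) :=
  (MvPolynomial.aeval (fun i (x : ↥V) => (x : Fin n → k) i) :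
    MvPolynomial (Fin n) k →ₐ[k] (↥V → k)).range

variable (k : Type) [Field k] (A : Type) [CommRing A] [Algebra k A]

/-- `homogEval D b c` is the evaluation `D#(b, c)` in `A` of the homogenization
`D#(X̄,Y) = Y^{deg D}·D(X̄/Y)` of `D` at the tuple `b` and the element `c`. -/
noncomputable def homogEval {m : ℕ} (D : MvPolynomial (Fin m) k) (b : Fin m → A) (c : A) :
    A :=
  ∑ s ∈ D.support, algebraMap k A (D.coeff s) * (∏ i, b i ^ s i) *
    c ^ (D.totalDegree - s.sum fun _ e => e)

/-- The generating set of the multiplicative set `Σ_a`: all elements `a^m · D#(b̄, aⁿ)` for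
`D` a polynomial over `k` with no rational zero in `k`. -/
def sigmaSet (a : A) : Set A :=
  {x | ∃ (m n mv : ℕ) (D : MvPolynomial (Fin mv) k) (b : Fin mv → A),
    (∀ v : Fin mv → k, eval v D ≠ 0) ∧ x = a ^ m * homogEval k A D b (a ^ n)}

/-- The set `M_B` of all evaluations in `B` of polynomials over `k` with no rational zero
in `k`. -/
def MAset (B : Type) [CommRing B] [Algebra k B] : Set B :=
  {x | ∃ (m : ℕ) (D : MvPolynomial (Fin m) k) (b : Fin m → B),
    (∀ v : Fin m → k, eval v D ≠ 0) ∧ x = aeval b D}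

section AuxLemmas

variable {k} {B : Type} [CommRing B] [Algebra k B]

lemma homogEval_C_one {A : Type} [CommRing A] [Algebra k A] (b : Fin 0 → A) (c : A) :
    homogEval k A (C 1 : MvPolynomial (Fin 0) k) b c = 1 := by
  classical
  have hsupp : (C 1 : MvPolynomial (Fin 0) k).support = {0} := by
    rw [C_apply, support_monomial, if_neg one_ne_zero]
  rw [homogEval, hsupp, Finset.sum_singleton]
  simp [totalDegree_C]

lemma a_mem_sigmaSet (a : B) : a ∈ sigmaSet k B a :=
  ⟨1, 0, 0, C 1, fun i => i.elim0, fun v => by simp,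
    by rw [homogEval_C_one, pow_one, mul_one]⟩

lemma homogEval_spec (a : B) {mv : ℕ} (D : MvPolynomial (Fin mv) k)
    (b : Fin mv → Localization (Submonoid.powers a)) (c : Fin mv → B) (p : ℕ)
    (h : ∀ i, b i * algebraMap B (Localization (Submonoid.powers a)) (a ^ p)
        = algebraMap B (Localization (Submonoid.powers a)) (c i)) :
    aeval b D * algebraMap B (Localization (Submonoid.powers a)) a ^ (p * D.totalDegree)
      = algebraMap B (Localization (Submonoid.powers a)) (homogEval k B D c (a ^ p)) := by
  set f := algebraMap B (Localization (Submonoid.powers a)) with hf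
  rw [homogEval, map_sum, aeval_def, eval₂_eq', Finset.sum_mul]
  refine Finset.sum_congr rfl fun s hs => ?_
  have hle : (s.sum fun _ e => e) ≤ D.totalDegree := le_totalDegree hs
  have hsum : (s.sum fun _ e => e) = ∑ i, s i := Finsupp.sum_fintype _ _ fun _ => rfl
  have key : (∏ i, b i ^ s i) * f a ^ (p * (s.sum fun _ e => e))
      = f (∏ i, c i ^ s i) := by
    rw [hsum, pow_mul, ← map_pow f a p, ← Finset.prod_pow_eq_pow_sum,
      ← Finset.prod_mul_distrib, map_prod]
    refine Finset.prod_congr rfl fun i _ => ?_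
    rw [← mul_pow, h i, map_pow]
  have hdeg : p * D.totalDegree
      = p * (s.sum fun _ e => e) + p * (D.totalDegree - (s.sum fun _ e => e)) := by
    rw [← Nat.mul_add, Nat.add_sub_cancel' hle]
  calc (algebraMap k (Localization (Submonoid.powers a))) (D.coeff s) * (∏ i, b i ^ s i)
          * f a ^ (p * D.totalDegree)
      = (algebraMap k (Localization (Submonoid.powers a))) (D.coeff s)
          * ((∏ i, b i ^ s i) * f a ^ (p * (s.sum fun _ e => e)))
          * f a ^ (p * (D.totalDegree - (s.sum fun _ e => e))) := by
        rw [hdeg, pow_add]; ring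
    _ = f (algebraMap k B (D.coeff s) * (∏ i, c i ^ s i)
          * (a ^ p) ^ (D.totalDegree - (s.sum fun _ e => e))) := by
        rw [key, map_mul, map_mul, map_pow, map_pow, ← pow_mul,
          ← IsScalarTower.algebraMap_apply k B]

lemma exists_rep (a : B) (x : Localization (Submonoid.powers a)) :
    ∃ (c : B) (p : ℕ), x * algebraMap B (Localization (Submonoid.powers a)) (a ^ p)
      = algebraMap B (Localization (Submonoid.powers a)) c := by
  obtain ⟨⟨c, s⟩, h⟩ := IsLocalization.surj (Submonoid.powers a) x
  obtain ⟨p, hp⟩ := s.2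
  have hp' : a ^ p = (s : B) := hp
  exact ⟨c, p, by rw [hp']; exact h⟩

lemma exists_rep_tuple (a : B) {mv : ℕ} (b : Fin mv → Localization (Submonoid.powers a)) :
    ∃ (p : ℕ) (c : Fin mv → B), ∀ i,
      b i * algebraMap B (Localization (Submonoid.powers a)) (a ^ p)
        = algebraMap B (Localization (Submonoid.powers a)) (c i) := by
  choose c q h using fun i => exists_rep a (b i)
  refine ⟨Finset.univ.sup q, fun i => c i * a ^ (Finset.univ.sup q - q i), fun i => ?_⟩
  have hq : q i ≤ Finset.univ.sup q := Finset.le_sup (Finset.mem_univ i)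
  have : a ^ Finset.univ.sup q = a ^ q i * a ^ (Finset.univ.sup q - q i) := by
    rw [← pow_add, Nat.add_sub_cancel' hq]
  rw [this, map_mul, ← mul_assoc, h i, ← map_mul]

lemma exists_clear (a : B) (t : Localization (Submonoid.powers a))
    (ht : t ∈ Submonoid.closure (MAset k (Localization (Submonoid.powers a)))) :
    ∃ (u : B) (N : ℕ), u ∈ Submonoid.closure (sigmaSet k B a) ∧
      t * algebraMap B (Localization (Submonoid.powers a)) (a ^ N)
        = algebraMap B (Localization (Submonoid.powers a)) u := by
  induction ht using Submonoid.closure_induction with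
  | mem x hx =>
    obtain ⟨mv, D, b, hD, rfl⟩ := hx
    obtain ⟨p, c, hc⟩ := exists_rep_tuple a b
    refine ⟨homogEval k B D c (a ^ p), p * D.totalDegree,
      Submonoid.subset_closure ⟨0, p, mv, D, c, hD, by rw [pow_zero, one_mul]⟩, ?_⟩
    rw [map_pow]
    exact homogEval_spec a D b c p hc
  | one => exact ⟨1, 0, one_mem _, by simp⟩
  | mul x y hx hy ihx ihy =>
    obtain ⟨u₁, N₁, hu₁, e₁⟩ := ihx
    obtain ⟨u₂, N₂, hu₂, e₂⟩ := ihy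
    refine ⟨u₁ * u₂, N₁ + N₂, mul_mem hu₁ hu₂, ?_⟩
    rw [pow_add, map_mul, map_mul, ← e₁, ← e₂]; ring

lemma main_isLoc (a : B) :
    Nonempty
      (Localization (Submonoid.closure (sigmaSet k B a)) ≃ₐ[k]
        Localization (Submonoid.closure (MAset k (Localization (Submonoid.powers a))))) := by
  set Ba := Localization (Submonoid.powers a) with hBa
  set Mcl := Submonoid.closure (MAset k Ba) with hM
  set L := Localization Mcl with hL
  set Scl := Submonoid.closure (sigmaSet k B a) with hS
  have habl : ∀ y : B, algebraMap B L y = algebraMap Ba L (algebraMap B Ba y) :=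
    fun y => IsScalarTower.algebraMap_apply B Ba L y
  have haunit : IsUnit (algebraMap B Ba a) :=
    IsLocalization.map_units Ba (⟨a, 1, pow_one a⟩ : Submonoid.powers a)
  haveI : IsLocalization Scl L := by
    constructor
    constructor
    · rintro ⟨y, hy⟩
      show IsUnit (algebraMap B L y)
      induction hy using Submonoid.closure_induction with
      | one => simp
      | mul x y hx hy ihx ihy => rw [map_mul]; exact ihx.mul ihy
      | mem x hx =>
        obtain ⟨m, nn, mv, D, b, hD, rfl⟩ := hx
        set b' : Fin mv → Ba := fun i =>
          IsLocalization.mk' Ba (b i) (⟨a ^ nn, nn, rfl⟩ : Submonoid.powers a) with hb'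
        have hspec : ∀ i, b' i * algebraMap B Ba (a ^ nn) = algebraMap B Ba (b i) :=
          fun i => IsLocalization.mk'_spec Ba (b i) (⟨a ^ nn, nn, rfl⟩ : Submonoid.powers a)
        have hkey := homogEval_spec a D b' b nn hspec
        have hMu : IsUnit (algebraMap Ba L (aeval b' D)) :=
          IsLocalization.map_units L
            (⟨aeval b' D, Submonoid.subset_closure ⟨mv, D, b', hD, rfl⟩⟩ : Mcl)
        have haL : IsUnit (algebraMap Ba L (algebraMap B Ba a)) := haunit.map _
        have hrw : algebraMap B L (a ^ m * homogEval k B D b (a ^ nn))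
            = algebraMap Ba L (algebraMap B Ba a) ^ m *
              (algebraMap Ba L (aeval b' D) *
                algebraMap Ba L (algebraMap B Ba a) ^ (nn * D.totalDegree)) := by
          rw [habl, map_mul, map_pow, ← hkey]
          simp only [map_mul, map_pow]
          rfl
        rw [hrw]
        exact (haL.pow m).mul (hMu.mul (haL.pow _))
    · intro z
      obtain ⟨⟨x, t⟩, hxt⟩ := IsLocalization.surj Mcl z
      obtain ⟨cB, p, hc⟩ := exists_rep a x
      obtain ⟨u, N, hu, hU⟩ := exists_clear a (t : Ba) t.2
      have hap : (a : B) ^ p ∈ Scl :=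
        pow_mem (Submonoid.subset_closure (a_mem_sigmaSet a)) p
      refine ⟨⟨cB * a ^ N, ⟨u * a ^ p, mul_mem hu hap⟩⟩, ?_⟩
      show z * algebraMap B L (u * a ^ p) = algebraMap B L (cB * a ^ N)
      rw [habl, habl]
      have e1 : algebraMap B Ba (u * a ^ p)
          = (t : Ba) * algebraMap B Ba (a ^ N) * algebraMap B Ba (a ^ p) := by
        rw [map_mul, ← hU]
      calc z * algebraMap Ba L (algebraMap B Ba (u * a ^ p))
          = z * algebraMap Ba L (t : Ba) *
              algebraMap Ba L (algebraMap B Ba (a ^ N) * algebraMap B Ba (a ^ p)) := by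
            rw [e1]; simp only [map_mul]; ring
        _ = algebraMap Ba L (x * (algebraMap B Ba (a ^ p) * algebraMap B Ba (a ^ N))) := by
            rw [hxt, ← map_mul]; congr 1; ring
        _ = algebraMap Ba L (algebraMap B Ba (cB * a ^ N)) := by
            rw [← mul_assoc, hc, ← map_mul]
    · intro x y hxy
      rw [habl, habl] at hxy
      obtain ⟨t, ht⟩ := IsLocalization.exists_of_eq (M := Mcl) hxy
      obtain ⟨u, N, hu, hU⟩ := exists_clear a (t : Ba) t.2
      have huxy : algebraMap B Ba (u * x) = algebraMap B Ba (u * y) := by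
        have h1 : algebraMap B Ba (u * x)
            = (t : Ba) * algebraMap B Ba x * algebraMap B Ba (a ^ N) := by
          rw [map_mul, ← hU]; ring
        have h2 : algebraMap B Ba (u * y)
            = (t : Ba) * algebraMap B Ba y * algebraMap B Ba (a ^ N) := by
          rw [map_mul, ← hU]; ring
        rw [h1, h2, ht]
      obtain ⟨s, hs⟩ := IsLocalization.exists_of_eq (M := Submonoid.powers a) huxy
      obtain ⟨q, hq⟩ := s.2
      refine ⟨⟨a ^ q * u, mul_mem (pow_mem (Submonoid.subset_closure (a_mem_sigmaSet a)) q)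
        hu⟩, ?_⟩
      show a ^ q * u * x = a ^ q * u * y
      have hq' : a ^ q = (s : B) := hq
      rw [hq', mul_assoc, mul_assoc, hs]
  exact ⟨(IsLocalization.algEquiv Scl (Localization Scl) L).restrictScalars k⟩

end AuxLemmas

/-- For any field `k`, an algebraic set `V ⊆ kⁿ` and `a ∈ k[V]`, the localization
`k[V]_{⟨a⟩}` of `k[V]` at the multiplicative set `Σ_a` is `k`-isomorphic to the canonical
localization `(k[V]_a)_M` of the usual localization `k[V]_a` at powers of `a`. -/
theorem localization_sigma_iso_canonical (n : ℕ) (V : Set (Fin n → k))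
    (hV : ∃ T : Set (MvPolynomial (Fin n) k), V = {x | ∀ f ∈ T, eval x f = 0})
    (a : ↥(coordRing k n V)) :
    Nonempty
      (Localization (Submonoid.closure (sigmaSet k ↥(coordRing k n V) a)) ≃ₐ[k]
        Localization (Submonoid.closure
          (MAset k (Localization (Submonoid.powers a))))) := by
  exact main_isLoc a
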